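/- For every cograph G and every integer k with 0 ≤ k ≤ α(G), there exists a partition of V(G) into V1 and V2 such that G[V1] is 1-extendable, α(G[V1]) = k, and α(G[V2]) ≤ max(k − 1, α(G) − k). -/

import Mathlib

open scoped Classical

variable {V : Type*}

/-- `S` is an independent set of the graph `G`. -/
def IndepF (G : SimpleGraph V) (S : Finset V) : Prop :=
  ∀ u ∈ S, ∀ v ∈ S, ¬ G.Adj u v

/-- The independence number of `G`. -/
noncomputable def alphaN [Fintype V] (G : SimpleGraph V) : ℕ :=
  Finset.univ.powerset.sup fun S => if IndepF G S then S.card else 0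

/-- `G` is 1-extendable: every vertex belongs to a maximum independent set. -/
def OneExt [Fintype V] (G : SimpleGraph V) : Prop :=
  ∀ v : V, ∃ S : Finset V, v ∈ S ∧ IndepF G S ∧ S.card = alphaN G

/-- The 1-extendable chromatic number of `G`. -/
noncomputable def chiOneExt [Fintype V] (G : SimpleGraph V) : ℕ :=
  sInf {k | ∃ c : V → Fin k, ∀ i : Fin k, OneExt (G.induce {v | c v = i})}

/-- The join (complete sum) of two graphs. -/
def gJoin {α β : Type*} (G : SimpleGraph α) (H : SimpleGraph β) : SimpleGraph (α ⊕ β) where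
  Adj u v := match u, v with
    | Sum.inl u, Sum.inl v => G.Adj u v
    | Sum.inr u, Sum.inr v => H.Adj u v
    | Sum.inl _, Sum.inr _ => True
    | Sum.inr _, Sum.inl _ => True
  symm := ⟨by rintro (u|u) (v|v) h <;> simp_all [SimpleGraph.adj_comm]⟩
  loopless := ⟨by rintro (u|u) h <;> simp_all⟩

/-- A cograph: a graph with no induced path on four vertices. -/
def IsCograph (G : SimpleGraph V) : Prop :=
  ¬ ∃ f : Fin 4 ↪ V, G.Adj (f 0) (f 1) ∧ G.Adj (f 1) (f 2) ∧ G.Adj (f 2) (f 3) ∧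
      ¬ G.Adj (f 0) (f 2) ∧ ¬ G.Adj (f 0) (f 3) ∧ ¬ G.Adj (f 1) (f 3)

section P1
variable {V : Type*}

/-- relative independence number on a finset of vertices -/
noncomputable def alphaA (G : SimpleGraph V) (A : Finset V) : ℕ :=
  A.powerset.sup fun S => if IndepF G S then S.card else 0

lemma alphaN_eq [Fintype V] (G : SimpleGraph V) : alphaN G = alphaA G Finset.univ := rfl

lemma indepF_mono {G : SimpleGraph V} {S T : Finset V} (h : S ⊆ T) (hT : IndepF G T) :
    IndepF G S := fun u hu v hv => hT u (h hu) v (h hv)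

lemma indepF_empty (G : SimpleGraph V) : IndepF G ∅ := by simp [IndepF]

lemma le_alphaA {G : SimpleGraph V} {A S : Finset V} (hS : S ⊆ A) (h : IndepF G S) :
    S.card ≤ alphaA G A := by
  have := Finset.le_sup (f := fun S => if IndepF G S then S.card else 0)
    (Finset.mem_powerset.2 hS)
  simpa [h, alphaA] using this

lemma alphaA_spec (G : SimpleGraph V) (A : Finset V) :
    ∃ S, S ⊆ A ∧ IndepF G S ∧ S.card = alphaA G A := by
  obtain ⟨S, hS, hval⟩ := Finset.exists_mem_eq_sup A.powerset ⟨∅, by simp⟩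
    (fun S => if IndepF G S then S.card else 0)
  by_cases h : IndepF G S
  · exact ⟨S, Finset.mem_powerset.1 hS, h, by rw [alphaA, hval]; simp [h]⟩
  · refine ⟨∅, by simp, indepF_empty G, ?_⟩
    rw [alphaA, hval]; simp [h]

lemma alphaA_mono (G : SimpleGraph V) {A B : Finset V} (h : A ⊆ B) :
    alphaA G A ≤ alphaA G B := by
  obtain ⟨S, hS, hi, hc⟩ := alphaA_spec G A
  exact hc ▸ le_alphaA (hS.trans h) hi

lemma alphaA_le_card (G : SimpleGraph V) (A : Finset V) : alphaA G A ≤ A.card := by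
  obtain ⟨S, hS, hi, hc⟩ := alphaA_spec G A
  exact hc ▸ Finset.card_le_card hS

lemma alphaA_empty (G : SimpleGraph V) : alphaA G ∅ = 0 := by
  simpa using alphaA_le_card G ∅

lemma alphaA_pos (G : SimpleGraph V) {A : Finset V} (h : A.Nonempty) :
    1 ≤ alphaA G A := by
  obtain ⟨v, hv⟩ := h
  have : IndepF G {v} := by
    intro a ha b hb
    have ha' := Finset.mem_singleton.1 ha
    have hb' := Finset.mem_singleton.1 hb
    subst ha'; subst hb'; exact G.loopless.irrefl _
  simpa using le_alphaA (by simpa using hv) this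

/-- relative 1-extendability -/
def OneExtA (G : SimpleGraph V) (A : Finset V) : Prop :=
  ∀ v ∈ A, ∃ S, S ⊆ A ∧ v ∈ S ∧ IndepF G S ∧ S.card = alphaA G A

end P1

section P2
variable {V : Type*} {G : SimpleGraph V}

lemma alphaA_union_no_edges {B C : Finset V} (hd : Disjoint B C)
    (hcross : ∀ u ∈ B, ∀ w ∈ C, ¬ G.Adj u w) :
    alphaA G (B ∪ C) = alphaA G B + alphaA G C := by
  apply le_antisymm
  · obtain ⟨S, hS, hi, hc⟩ := alphaA_spec G (B ∪ C)
    have hsplit : (S ∩ B) ∪ (S ∩ C) = S := by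
      rw [← Finset.inter_union_distrib_left]
      exact Finset.inter_eq_left.2 hS
    have hdisj : Disjoint (S ∩ B) (S ∩ C) :=
      hd.mono Finset.inter_subset_right Finset.inter_subset_right
    have : S.card = (S ∩ B).card + (S ∩ C).card := by
      rw [← Finset.card_union_of_disjoint hdisj, hsplit]
    rw [← hc, this]
    exact Nat.add_le_add
      (le_alphaA Finset.inter_subset_right (indepF_mono Finset.inter_subset_left hi))
      (le_alphaA Finset.inter_subset_right (indepF_mono Finset.inter_subset_left hi))
  · obtain ⟨S1, hS1, hi1, hc1⟩ := alphaA_spec G B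
    obtain ⟨S2, hS2, hi2, hc2⟩ := alphaA_spec G C
    have hdisj : Disjoint S1 S2 := hd.mono hS1 hS2
    have hind : IndepF G (S1 ∪ S2) := by
      intro u hu v hv
      rcases Finset.mem_union.1 hu with hu | hu <;> rcases Finset.mem_union.1 hv with hv | hv
      · exact hi1 u hu v hv
      · exact hcross u (hS1 hu) v (hS2 hv)
      · intro h; exact hcross v (hS1 hv) u (hS2 hu) h.symm
      · exact hi2 u hu v hv
    have := le_alphaA (Finset.union_subset_union hS1 hS2) hind
    rwa [Finset.card_union_of_disjoint hdisj, hc1, hc2] at this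

lemma alphaA_union_all_edges {B C : Finset V} (hd : Disjoint B C)
    (hcross : ∀ u ∈ B, ∀ w ∈ C, G.Adj u w) :
    alphaA G (B ∪ C) = max (alphaA G B) (alphaA G C) := by
  apply le_antisymm
  · obtain ⟨S, hS, hi, hc⟩ := alphaA_spec G (B ∪ C)
    rw [← hc]
    by_cases hB : ∃ u ∈ S, u ∈ B
    · obtain ⟨u, huS, huB⟩ := hB
      have hSB : S ⊆ B := by
        intro w hw
        rcases Finset.mem_union.1 (hS hw) with h | h
        · exact h
        · exact absurd (hcross u huB w h) (hi u huS w hw)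
      exact le_max_of_le_left (le_alphaA hSB hi)
    · push_neg at hB
      have hSC : S ⊆ C := fun w hw => (Finset.mem_union.1 (hS hw)).resolve_left (hB w hw)
      exact le_max_of_le_right (le_alphaA hSC hi)
  · exact max_le (alphaA_mono G Finset.subset_union_left)
      (alphaA_mono G Finset.subset_union_right)

lemma oneExtA_union_no_edges {B C : Finset V} (hd : Disjoint B C)
    (hcross : ∀ u ∈ B, ∀ w ∈ C, ¬ G.Adj u w)
    (h1 : OneExtA G B) (h2 : OneExtA G C) : OneExtA G (B ∪ C) := by
  have key : ∀ v ∈ B ∪ C, ∃ S, S ⊆ B ∪ C ∧ v ∈ S ∧ IndepF G S ∧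
      S.card = alphaA G B + alphaA G C := by
    intro v hv
    rcases Finset.mem_union.1 hv with hvB | hvC
    · obtain ⟨S1, hS1, hv1, hi1, hc1⟩ := h1 v hvB
      obtain ⟨S2, hS2, hi2, hc2⟩ := alphaA_spec G C
      refine ⟨S1 ∪ S2, Finset.union_subset_union hS1 hS2, Finset.mem_union_left _ hv1, ?_, ?_⟩
      · intro u hu w hw
        rcases Finset.mem_union.1 hu with hu | hu <;> rcases Finset.mem_union.1 hw with hw | hw
        · exact hi1 u hu w hw
        · exact hcross u (hS1 hu) w (hS2 hw)
        · intro h; exact hcross w (hS1 hw) u (hS2 hu) h.symm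
        · exact hi2 u hu w hw
      · rw [Finset.card_union_of_disjoint (hd.mono hS1 hS2), hc1, hc2]
    · obtain ⟨S2, hS2, hv2, hi2, hc2⟩ := h2 v hvC
      obtain ⟨S1, hS1, hi1, hc1⟩ := alphaA_spec G B
      refine ⟨S1 ∪ S2, Finset.union_subset_union hS1 hS2, Finset.mem_union_right _ hv2, ?_, ?_⟩
      · intro u hu w hw
        rcases Finset.mem_union.1 hu with hu | hu <;> rcases Finset.mem_union.1 hw with hw | hw
        · exact hi1 u hu w hw
        · exact hcross u (hS1 hu) w (hS2 hw)
        · intro h; exact hcross w (hS1 hw) u (hS2 hu) h.symm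
        · exact hi2 u hu w hw
      · rw [Finset.card_union_of_disjoint (hd.mono hS1 hS2), hc1, hc2]
  intro v hv
  obtain ⟨S, h1', h2', h3', h4'⟩ := key v hv
  exact ⟨S, h1', h2', h3', by rw [h4', alphaA_union_no_edges hd hcross]⟩

lemma oneExtA_union_all_edges {B C : Finset V} (hd : Disjoint B C)
    (hcross : ∀ u ∈ B, ∀ w ∈ C, G.Adj u w)
    (heq : alphaA G B = alphaA G C)
    (h1 : OneExtA G B) (h2 : OneExtA G C) : OneExtA G (B ∪ C) := by
  intro v hv
  have hmax : alphaA G (B ∪ C) = alphaA G B := by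
    rw [alphaA_union_all_edges hd hcross, heq, max_self]
  rcases Finset.mem_union.1 hv with hvB | hvC
  · obtain ⟨S, hS, hvS, hi, hc⟩ := h1 v hvB
    exact ⟨S, hS.trans Finset.subset_union_left, hvS, hi, by rw [hc, hmax]⟩
  · obtain ⟨S, hS, hvS, hi, hc⟩ := h2 v hvC
    exact ⟨S, hS.trans Finset.subset_union_right, hvS, hi, by rw [hc, hmax]; exact heq.symm⟩

end P2

section P3
variable {V : Type*}

lemma isCograph_compl {G : SimpleGraph V} (hG : IsCograph G) : IsCograph Gᶜ := by
  rintro ⟨f, h01, h12, h23, h02, h03, h13⟩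
  apply hG
  have hne : ∀ i j : Fin 4, i ≠ j → f i ≠ f j := fun i j hij => fun h => hij (f.injective h)
  refine ⟨⟨![f 1, f 3, f 0, f 2], ?_⟩, ?_, ?_, ?_, ?_, ?_, ?_⟩
  · intro i j hij
    fin_cases i <;> fin_cases j <;> simp_all <;>
      first
        | rfl
        | exact absurd hij (hne _ _ (by decide))
        | exact absurd hij.symm (hne _ _ (by decide))
  all_goals simp only [Function.Embedding.coeFn_mk, Matrix.cons_val_zero, Matrix.cons_val_one,
    Matrix.head_cons, Matrix.cons_val_two, Matrix.tail_cons, Matrix.cons_val_three, DFunLike.coe]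
  · -- G.Adj (f 1) (f 3)
    by_contra h
    exact h13 ((SimpleGraph.compl_adj G _ _).2 ⟨hne 1 3 (by decide), h⟩)
  · by_contra h
    exact h03 ((SimpleGraph.compl_adj G _ _).2 ⟨hne 0 3 (by decide), fun h' => h h'.symm⟩)
  · by_contra h
    exact h02 ((SimpleGraph.compl_adj G _ _).2 ⟨hne 0 2 (by decide), h⟩)
  · exact fun h => h01.2 h.symm
  · exact fun h => h12.2 h
  · exact fun h => h23.2 h.symm
end P3

section P3B
variable {V : Type*}

lemma isCograph_induce {G : SimpleGraph V} (hG : IsCograph G) (S : Set V) :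
    IsCograph (G.induce S) := by
  rintro ⟨f, h01, h12, h23, h02, h03, h13⟩
  exact hG ⟨f.trans (Function.Embedding.subtype _), h01, h12, h23, h02, h03, h13⟩

lemma compl_induce (G : SimpleGraph V) (S : Set V) :
    (G.induce S)ᶜ = Gᶜ.induce S := by
  ext a b
  constructor
  · rintro ⟨hne, hn⟩
    exact ⟨fun h => hne (Subtype.ext h), fun h => hn h⟩
  · rintro ⟨hne, hn⟩
    exact ⟨fun h => hne (congrArg Subtype.val h), hn⟩

lemma exists_adj_of_reachable {G : SimpleGraph V} {a b : V} (h : G.Reachable a b)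
    (hne : a ≠ b) : ∃ c, G.Adj a c := by
  obtain ⟨p⟩ := h
  cases p with
  | nil => exact absurd rfl hne
  | cons h q => exact ⟨_, h⟩

lemma claimA' {G : SimpleGraph V} {v : V} {s t : V} (p : G.Walk s t) :
    ∀ _hteq : t = v, ∀ hs : s ≠ v, ∃ z, ∃ hz : z ≠ v, G.Adj v z ∧
      (G.induce {u | u ≠ v}).Reachable ⟨s, hs⟩ ⟨z, hz⟩ := by
  induction p with
  | nil => exact fun hteq hs => absurd hteq hs
  | @cons a c _ h q ih =>
    intro hteq hs
    by_cases hc : c = v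
    · refine ⟨a, hs, ?_, SimpleGraph.Reachable.refl _⟩
      have : G.Adj a v := hc ▸ h
      exact this.symm
    · obtain ⟨z, hz, hadj, hr⟩ := ih hteq hc
      have hstep : (G.induce {u | u ≠ v}).Adj ⟨a, hs⟩ ⟨c, hc⟩ := h
      exact ⟨z, hz, hadj, hstep.reachable.trans hr⟩

lemma claimA {G : SimpleGraph V} {v : V} {s : V} (p : G.Walk s v) (hs : s ≠ v) :
    ∃ z, ∃ hz : z ≠ v, G.Adj v z ∧
      (G.induce {u | u ≠ v}).Reachable ⟨s, hs⟩ ⟨z, hz⟩ :=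
  claimA' p rfl hs

lemma claimB {G : SimpleGraph V} {v : V} {s t : ↥{u | u ≠ v}}
    (p : (G.induce {u | u ≠ v}).Walk s t) :
    ∀ _hs : G.Adj v s.1, ∀ _ht : ¬ G.Adj v t.1,
    ∃ z y : ↥{u | u ≠ v}, G.Adj v z.1 ∧ ¬ G.Adj v y.1 ∧ G.Adj z.1 y.1 ∧
      (G.induce {u | u ≠ v}).Reachable t z ∧ (G.induce {u | u ≠ v}).Reachable t y := by
  induction p with
  | nil => exact fun hs ht => absurd hs ht
  | @cons a c _ h q ih =>
    intro hs ht
    by_cases hc : G.Adj v c.1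
    · exact ih hc ht
    · have hac : G.Adj a.1 c.1 := h
      exact ⟨a, c, hs, hc, hac, (SimpleGraph.Walk.reachable (SimpleGraph.Walk.cons h q)).symm,
        (SimpleGraph.Walk.reachable q).symm⟩

end P3B

section P3C
variable {V : Type*}

lemma seinsche_key {G : SimpleGraph V} (hG : IsCograph G) (v : V)
    (hd : ¬ (G.induce {u | u ≠ v}).Preconnected)
    (hc : G.Preconnected) (hcc : Gᶜ.Preconnected) : False := by
  set G' := G.induce {u | u ≠ v} with hG'
  -- two non-reachable vertices in G - v
  rw [SimpleGraph.Preconnected] at hd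
  push_neg at hd
  obtain ⟨a, b, hab⟩ := hd
  -- a non-neighbor x of v
  obtain ⟨x0, hx0⟩ : ∃ c, Gᶜ.Adj v c :=
    exists_adj_of_reachable (hcc v a.1) (fun h => a.2 h.symm)
  have hx0ne : x0 ≠ v := fun h => (G.compl_adj v x0).1 hx0 |>.1 h.symm
  have hvx0 : ¬ G.Adj v x0 := ((G.compl_adj v x0).1 hx0).2
  set x : ↥{u | u ≠ v} := ⟨x0, hx0ne⟩ with hxdef
  -- one of a, b is not reachable from x
  have hxw : ∃ w : ↥{u | u ≠ v}, ¬ G'.Reachable x w := by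
    by_contra h
    push_neg at h
    exact hab ((h a).symm.trans (h b))
  obtain ⟨c0, hc0⟩ := hxw
  -- a neighbor w of v in c0's component
  obtain ⟨p⟩ := hc c0.1 v
  obtain ⟨w, hwne, hvw, hrw⟩ := claimA p c0.2
  have hxw' : ¬ G'.Reachable x ⟨w, hwne⟩ := by
    intro h
    exact hc0 (h.trans hrw.symm)
  -- a neighbor z0 of v in x's component
  obtain ⟨q⟩ := hc x0 v
  obtain ⟨z0, hz0ne, hvz0, hrz0⟩ := claimA q hx0ne
  -- an edge z-y in x's component with z neighbor, y non-neighbor of v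
  obtain ⟨r⟩ := hrz0.symm
  obtain ⟨z, y, hvz, hvy, hzy, hrz, hry⟩ := claimB r hvz0 hvx0
  -- hrz hry : reachable from x
  have hwz : ¬ G.Adj w z.1 := by
    intro h
    have hstep : G'.Adj ⟨w, hwne⟩ z := h
    exact hxw' (hrz.trans hstep.reachable.symm)
  have hwy : ¬ G.Adj w y.1 := by
    intro h
    have hstep : G'.Adj ⟨w, hwne⟩ y := h
    exact hxw' (hry.trans hstep.reachable.symm)
  -- distinctness
  have hwnez : w ≠ z.1 := by
    intro h
    apply hxw'
    have he : (⟨w, hwne⟩ : ↥{u | u ≠ v}) = z := Subtype.ext h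
    rw [he]; exact hrz
  have hwney : w ≠ y.1 := by
    intro h
    apply hxw'
    have he : (⟨w, hwne⟩ : ↥{u | u ≠ v}) = y := Subtype.ext h
    rw [he]; exact hry
  have hzney : z.1 ≠ y.1 := G.ne_of_adj hzy
  -- build the P4 : w - v - z - y
  refine hG ⟨⟨![w, v, z.1, y.1], ?_⟩, ?_⟩
  · intro i j hij
    fin_cases i <;> fin_cases j <;>
      simp only [Matrix.cons_val_zero, Matrix.cons_val_one, Matrix.head_cons,
        Matrix.cons_val_two, Matrix.tail_cons, Matrix.cons_val_three, Fin.mk_zero,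
        Fin.mk_one] at hij ⊢ <;>
      first
        | rfl
        | exact absurd hij hwne
        | exact absurd hij.symm hwne
        | exact absurd hij hwnez
        | exact absurd hij.symm hwnez
        | exact absurd hij hwney
        | exact absurd hij.symm hwney
        | exact absurd hij z.2
        | exact absurd hij.symm z.2
        | exact absurd hij y.2
        | exact absurd hij.symm y.2
        | exact absurd hij hzney
        | exact absurd hij.symm hzney
  · simp only [Function.Embedding.coeFn_mk, Matrix.cons_val_zero, Matrix.cons_val_one,
      Matrix.head_cons, Matrix.cons_val_two, Matrix.tail_cons, Matrix.cons_val_three, DFunLike.coe]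
    exact ⟨hvw.symm, hvz, hzy, hwz, hwy, hvy⟩

end P3C

section P3D

lemma seinsche_aux : ∀ (n : ℕ), ∀ {V : Type u} [Fintype V] (G : SimpleGraph V),
    Fintype.card V = n → IsCograph G → 2 ≤ Fintype.card V →
    ¬ G.Preconnected ∨ ¬ Gᶜ.Preconnected := by
  intro n
  induction n using Nat.strong_induction_on with
  | _ n ih =>
    intro V _ G hn hG h2
    by_contra hcon
    push_neg at hcon
    obtain ⟨hP, hPc⟩ := hcon
    rcases eq_or_lt_of_le h2 with hcard2 | hcard3
    · -- card = 2
      obtain ⟨a, b, hab, huniv⟩ := Finset.card_eq_two.1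
        (show (Finset.univ : Finset V).card = 2 by rw [Finset.card_univ]; omega)
      have hmem : ∀ x : V, x = a ∨ x = b := by
        intro x
        have : x ∈ ({a, b} : Finset V) := huniv ▸ Finset.mem_univ x
        simpa using this
      obtain ⟨c, hc⟩ := exists_adj_of_reachable (hP a b) hab
      have hcb : c = b := by
        rcases hmem c with h | h
        · exact absurd (h ▸ hc) (G.loopless.irrefl a)
        · exact h
      obtain ⟨c', hc'⟩ := exists_adj_of_reachable (hPc a b) hab
      have hcb' : c' = b := by
        rcases hmem c' with h | h
        · exact absurd (h ▸ hc') (Gᶜ.loopless.irrefl a)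
        · exact h
      exact ((G.compl_adj a b).1 (hcb' ▸ hc')).2 (hcb ▸ hc)
    · -- card ≥ 3
      have hne : Nonempty V := Fintype.card_pos_iff.1 (by omega)
      obtain ⟨v⟩ := hne
      have hcard' : Fintype.card ↥{u | u ≠ v} = n - 1 := by
        have := Fintype.card_subtype_compl (fun u => u = v)
        have h1 : Fintype.card {u : V // u = v} = 1 := Fintype.card_subtype_eq v
        have : Fintype.card {u : V // ¬ u = v} = Fintype.card V - 1 := by rw [this, h1]
        rw [← hn, ← this]; exact Fintype.card_congr (Equiv.refl _)
      have hlt : n - 1 < n := by omega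
      have h2' : 2 ≤ Fintype.card ↥{u | u ≠ v} := by rw [hcard']; omega
      rcases ih (n - 1) hlt (G.induce {u | u ≠ v}) hcard'
          (isCograph_induce hG _) h2' with h | h
      · exact seinsche_key hG v h hP hPc
      · rw [compl_induce] at h
        exact seinsche_key (isCograph_compl hG) v h hPc (by rwa [compl_compl])

lemma seinsche {V : Type u} [Fintype V] (G : SimpleGraph V) (hG : IsCograph G)
    (h2 : 2 ≤ Fintype.card V) : ¬ G.Preconnected ∨ ¬ Gᶜ.Preconnected :=
  seinsche_aux (Fintype.card V) G rfl hG h2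

end P3D

section P3E
variable {V : Type*} [Fintype V]

lemma splitA {G : SimpleGraph V} (hG : IsCograph G) {A : Finset V}
    (hA : 2 ≤ A.card) : ∃ B : Finset V, B ⊆ A ∧ B.Nonempty ∧ B ≠ A ∧
    ((∀ u ∈ B, ∀ w ∈ A \ B, ¬ G.Adj u w) ∨ (∀ u ∈ B, ∀ w ∈ A \ B, G.Adj u w)) := by
  set T : Set V := ↑A with hT
  set G' := G.induce T with hG'def
  have hcard : 2 ≤ Fintype.card ↥T := by
    have : Fintype.card ↥T = A.card := Fintype.card_coe A
    omega
  rcases seinsche G' (isCograph_induce hG T) hcard with h | h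
  · -- G' not preconnected : no-edge split
    rw [SimpleGraph.Preconnected] at h
    push_neg at h
    obtain ⟨a, b, hab⟩ := h
    refine ⟨A.filter (fun w => ∃ h : w ∈ T, G'.Reachable a ⟨w, h⟩), Finset.filter_subset _ _,
      ⟨a.1, ?_⟩, ?_, Or.inl ?_⟩
    · exact Finset.mem_filter.2 ⟨by exact_mod_cast a.2, a.2, SimpleGraph.Reachable.refl _⟩
    · intro hBA
      have hbB : (b : V) ∈ A.filter (fun w => ∃ h : w ∈ T, G'.Reachable a ⟨w, h⟩) := by
        rw [hBA]; exact_mod_cast b.2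
      obtain ⟨-, hb, hr⟩ := Finset.mem_filter.1 hbB
      exact hab (by convert hr)
    · intro u hu w hw hadj
      obtain ⟨huA, hu', hru⟩ := Finset.mem_filter.1 hu
      obtain ⟨hwA, hwB⟩ := Finset.mem_sdiff.1 hw
      have hwT : w ∈ T := by exact_mod_cast hwA
      have hstep : G'.Adj ⟨u, hu'⟩ ⟨w, hwT⟩ := hadj
      exact hwB (Finset.mem_filter.2 ⟨hwA, hwT, hru.trans hstep.reachable⟩)
  · -- complement of G' not preconnected : all-edge split
    rw [SimpleGraph.Preconnected] at h
    push_neg at h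
    obtain ⟨a, b, hab⟩ := h
    refine ⟨A.filter (fun w => ∃ h : w ∈ T, G'ᶜ.Reachable a ⟨w, h⟩), Finset.filter_subset _ _,
      ⟨a.1, ?_⟩, ?_, Or.inr ?_⟩
    · exact Finset.mem_filter.2 ⟨by exact_mod_cast a.2, a.2, SimpleGraph.Reachable.refl _⟩
    · intro hBA
      have hbB : (b : V) ∈ A.filter (fun w => ∃ h : w ∈ T, G'ᶜ.Reachable a ⟨w, h⟩) := by
        rw [hBA]; exact_mod_cast b.2
      obtain ⟨-, hb, hr⟩ := Finset.mem_filter.1 hbB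
      exact hab (by convert hr)
    · intro u hu w hw
      obtain ⟨huA, hu', hru⟩ := Finset.mem_filter.1 hu
      obtain ⟨hwA, hwB⟩ := Finset.mem_sdiff.1 hw
      have hwT : w ∈ T := by exact_mod_cast hwA
      by_contra hadj
      have hne : (⟨u, hu'⟩ : ↥T) ≠ ⟨w, hwT⟩ := by
        intro hh
        apply hwB
        have huw : u = w := congrArg Subtype.val hh
        subst huw
        exact Finset.mem_filter.2 ⟨huA, hu', hru⟩
      have hstep : G'ᶜ.Adj ⟨u, hu'⟩ ⟨w, hwT⟩ := ⟨hne, fun hh => hadj hh⟩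
      exact hwB (Finset.mem_filter.2 ⟨hwA, hwT, hru.trans hstep.reachable⟩)

end P3E

section P4sec
variable {V : Type*} [Fintype V]

lemma sdiff_union_decomp {B0 C0 B1 B2 : Finset V} (hd : Disjoint B0 C0)
    (hB1 : B1 ⊆ B0) (hB2 : B2 ⊆ C0) :
    (B0 ∪ C0) \ (B1 ∪ B2) = (B0 \ B1) ∪ (C0 \ B2) := by
  ext x
  simp only [Finset.mem_sdiff, Finset.mem_union]
  have h1 : x ∈ B1 → x ∈ B0 := fun h => hB1 h
  have h2 : x ∈ B2 → x ∈ C0 := fun h => hB2 h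
  have h3 : x ∈ B0 → x ∈ C0 → False := fun h h' => Finset.disjoint_left.1 hd h h'
  tauto

lemma sdiff_union_decomp' {B0 C0 B1 : Finset V} (hd : Disjoint B0 C0)
    (hB1 : B1 ⊆ B0) :
    (B0 ∪ C0) \ B1 = (B0 \ B1) ∪ C0 := by
  ext x
  simp only [Finset.mem_sdiff, Finset.mem_union]
  have h1 : x ∈ B1 → x ∈ B0 := fun h => hB1 h
  have h3 : x ∈ B0 → x ∈ C0 → False := fun h h' => Finset.disjoint_left.1 hd h h'
  tauto

lemma joinCase {G : SimpleGraph V} {n : ℕ}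
    (ih : ∀ m, m < n → ∀ A : Finset V, A.card = m → ∀ k, k ≤ alphaA G A →
      ∃ B, B ⊆ A ∧ OneExtA G B ∧ alphaA G B = k ∧
        alphaA G (A \ B) ≤ max (k - 1) (alphaA G A - k))
    {B0 C0 : Finset V} (hd : Disjoint B0 C0)
    (hcross : ∀ u ∈ B0, ∀ w ∈ C0, G.Adj u w)
    (hB0n : B0.card < n) (hC0n : C0.card < n)
    (hle : alphaA G C0 ≤ alphaA G B0)
    {k : ℕ} (hk1 : 1 ≤ k) (hk : k ≤ alphaA G B0) :
    ∃ B, B ⊆ B0 ∪ C0 ∧ OneExtA G B ∧ alphaA G B = k ∧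
      alphaA G ((B0 ∪ C0) \ B) ≤ max (k - 1) (alphaA G B0 - k) := by
  by_cases hk2 : k ≤ alphaA G C0
  · obtain ⟨B1, hB1, hx1, ha1, hr1⟩ := ih B0.card hB0n B0 rfl k hk
    obtain ⟨B2, hB2, hx2, ha2, hr2⟩ := ih C0.card hC0n C0 rfl k hk2
    have hd' : Disjoint B1 B2 := hd.mono hB1 hB2
    have hcross' : ∀ u ∈ B1, ∀ w ∈ B2, G.Adj u w :=
      fun u hu w hw => hcross u (hB1 hu) w (hB2 hw)
    refine ⟨B1 ∪ B2, Finset.union_subset_union hB1 hB2,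
      oneExtA_union_all_edges hd' hcross' (by rw [ha1, ha2]) hx1 hx2, ?_, ?_⟩
    · rw [alphaA_union_all_edges hd' hcross', ha1, ha2, max_self]
    · rw [sdiff_union_decomp hd hB1 hB2,
        alphaA_union_all_edges (hd.mono Finset.sdiff_subset Finset.sdiff_subset)
          (fun u hu w hw => hcross u (Finset.sdiff_subset hu) w (Finset.sdiff_subset hw))]
      omega
  · push_neg at hk2
    obtain ⟨B1, hB1, hx1, ha1, hr1⟩ := ih B0.card hB0n B0 rfl k hk
    refine ⟨B1, hB1.trans Finset.subset_union_left, hx1, ha1, ?_⟩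
    rw [sdiff_union_decomp' hd hB1,
      alphaA_union_all_edges (hd.mono Finset.sdiff_subset (le_refl _))
        (fun u hu w hw => hcross u (Finset.sdiff_subset hu) w hw)]
    omega

lemma mainA {G : SimpleGraph V} (hG : IsCograph G) :
    ∀ (n : ℕ) (A : Finset V), A.card = n → ∀ k, k ≤ alphaA G A →
    ∃ B, B ⊆ A ∧ OneExtA G B ∧ alphaA G B = k ∧
      alphaA G (A \ B) ≤ max (k - 1) (alphaA G A - k) := by
  intro n
  induction n using Nat.strong_induction_on with
  | _ n ih =>
    intro A hn k hk
    by_cases hk0 : k = 0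
    · subst hk0
      refine ⟨∅, Finset.empty_subset _, fun v hv => absurd hv (Finset.notMem_empty v),
        alphaA_empty G, ?_⟩
      rw [Finset.sdiff_empty]
      omega
    have hk1 : 1 ≤ k := Nat.one_le_iff_ne_zero.2 hk0
    by_cases hcard : A.card ≤ 1
    · -- A is a singleton, k = 1
      have hA1 : alphaA G A ≤ 1 := le_trans (alphaA_le_card G A) hcard
      have hkeq : k = 1 := le_antisymm (hk.trans hA1) hk1
      have hAne : A.Nonempty := by
        rcases Finset.eq_empty_or_nonempty A with h | h
        · exfalso; rw [h, alphaA_empty] at hk; omega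
        · exact h
      have hindA : IndepF G A := by
        intro u hu w hw
        have : u = w := by
          have := Finset.card_le_one.1 hcard u hu w hw
          exact this
        subst this
        exact G.loopless.irrefl u
      have halphaA : alphaA G A = 1 := le_antisymm hA1 (alphaA_pos G hAne)
      refine ⟨A, le_refl _, ?_, by rw [halphaA, hkeq], ?_⟩
      · intro v hv
        exact ⟨A, le_refl _, hv, hindA, by rw [halphaA]; exact le_antisymm hcard hAne.card_pos⟩
      · rw [Finset.sdiff_self, alphaA_empty]
        omega
    -- A.card ≥ 2 : split
    push_neg at hcard
    obtain ⟨B0, hB0A, hB0ne, hB0neA, hsplit⟩ := splitA hG (by omega : 2 ≤ A.card)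
    set C0 : Finset V := A \ B0 with hC0def
    have hd : Disjoint B0 C0 := Finset.disjoint_sdiff
    have hunion : B0 ∪ C0 = A := Finset.union_sdiff_of_subset hB0A
    have hC0ne : C0.Nonempty := by
      rcases Finset.eq_empty_or_nonempty C0 with h | h
      · exfalso
        apply hB0neA
        have := Finset.sdiff_eq_empty_iff_subset.1 h
        exact le_antisymm hB0A this
      · exact h
    have hB0n : B0.card < n := by
      have h1 : B0.card ≤ A.card := Finset.card_le_card hB0A
      have h2 : C0.card ≤ A.card := Finset.card_le_card Finset.sdiff_subset
      have h3 : B0.card + C0.card = A.card := by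
        rw [← Finset.card_union_of_disjoint hd, hunion]
      have := hC0ne.card_pos
      omega
    have hC0n : C0.card < n := by
      have h3 : B0.card + C0.card = A.card := by
        rw [← Finset.card_union_of_disjoint hd, hunion]
      have := hB0ne.card_pos
      omega
    rcases hsplit with hcross | hcross
    · -- disjoint union case
      have halpha : alphaA G A = alphaA G B0 + alphaA G C0 := by
        rw [← hunion, alphaA_union_no_edges hd hcross]
      obtain ⟨k1, hk1def⟩ : ∃ k1, k1 = min (max ((alphaA G B0 + 1) / 2) (k - alphaA G C0)) k :=
        ⟨_, rfl⟩
      obtain ⟨k2, hk2def⟩ : ∃ k2, k2 = k - k1 := ⟨_, rfl⟩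
      have hk1le : k1 ≤ alphaA G B0 := by omega
      have hk2le : k2 ≤ alphaA G C0 := by omega
      obtain ⟨B1, hB1, hx1, ha1, hr1⟩ := ih B0.card hB0n B0 rfl k1 hk1le
      obtain ⟨B2, hB2, hx2, ha2, hr2⟩ := ih C0.card hC0n C0 rfl k2 hk2le
      have hd' : Disjoint B1 B2 := hd.mono hB1 hB2
      have hcross' : ∀ u ∈ B1, ∀ w ∈ B2, ¬ G.Adj u w :=
        fun u hu w hw => hcross u (hB1 hu) w (hB2 hw)
      refine ⟨B1 ∪ B2, by rw [← hunion]; exact Finset.union_subset_union hB1 hB2,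
        oneExtA_union_no_edges hd' hcross' hx1 hx2, ?_, ?_⟩
      · rw [alphaA_union_no_edges hd' hcross', ha1, ha2]
        omega
      · have halpha' : alphaA G (B0 ∪ C0) = alphaA G B0 + alphaA G C0 := by
          rw [hunion]; exact halpha
        rw [← hunion, sdiff_union_decomp hd hB1 hB2,
          alphaA_union_no_edges (hd.mono Finset.sdiff_subset Finset.sdiff_subset)
            (fun u hu w hw => hcross u (Finset.sdiff_subset hu) w (Finset.sdiff_subset hw))]
        omega
    · -- join case
      have halpha : alphaA G A = max (alphaA G B0) (alphaA G C0) := by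
        rw [← hunion, alphaA_union_all_edges hd hcross]
      rcases le_total (alphaA G C0) (alphaA G B0) with hle | hle
      · have hkB : k ≤ alphaA G B0 := by omega
        obtain ⟨B, hB, hx, ha, hr⟩ := joinCase ih hd hcross hB0n hC0n hle hk1 hkB
        have halpha' : alphaA G (B0 ∪ C0) = max (alphaA G B0) (alphaA G C0) := by
          rw [hunion]; exact halpha
        refine ⟨B, by rwa [hunion] at hB, hx, ha, ?_⟩
        rw [← hunion]
        omega
      · have hkC : k ≤ alphaA G C0 := by omega
        have hd2 : Disjoint C0 B0 := hd.symm
        have hcross2 : ∀ u ∈ C0, ∀ w ∈ B0, G.Adj u w :=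
          fun u hu w hw => (hcross w hw u hu).symm
        obtain ⟨B, hB, hx, ha, hr⟩ := joinCase ih hd2 hcross2 hC0n hB0n hle hk1 hkC
        rw [Finset.union_comm, hunion] at hB hr
        refine ⟨B, hB, hx, ha, ?_⟩
        omega

end P4sec

section P5
variable {V : Type*} [Fintype V] {G : SimpleGraph V}

noncomputable def upF (S : Set V) [Fintype ↥S] (T : Finset V) (hT : ∀ x ∈ T, x ∈ S) :
    Finset ↥S :=
  T.attach.map ⟨fun x => ⟨x.1, hT x.1 x.2⟩, by
    intro x y h
    simp only [Subtype.mk.injEq] at h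
    exact Subtype.ext h⟩

lemma mem_upF {S : Set V} [Fintype ↥S] {T : Finset V} (hT : ∀ x ∈ T, x ∈ S) (y : ↥S) :
    y ∈ upF S T hT ↔ y.1 ∈ T := by
  simp only [upF, Finset.mem_map, Function.Embedding.coeFn_mk]
  constructor
  · rintro ⟨x, -, rfl⟩
    exact x.2
  · intro h
    exact ⟨⟨y.1, h⟩, Finset.mem_attach _ _, Subtype.ext rfl⟩

lemma card_upF {S : Set V} [Fintype ↥S] {T : Finset V} (hT : ∀ x ∈ T, x ∈ S) :
    (upF S T hT).card = T.card := by
  rw [upF, Finset.card_map, Finset.card_attach]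

lemma indep_upF {S : Set V} [Fintype ↥S] {T : Finset V} (hT : ∀ x ∈ T, x ∈ S)
    (h : IndepF G T) : IndepF (G.induce S) (upF S T hT) := by
  intro u hu v hv hadj
  exact h u.1 ((mem_upF hT u).1 hu) v.1 ((mem_upF hT v).1 hv) hadj

lemma indep_down {S : Set V} [Fintype ↥S] {T : Finset ↥S}
    (h : IndepF (G.induce S) T) :
    IndepF G (T.map (Function.Embedding.subtype _)) := by
  intro u hu v hv hadj
  obtain ⟨a, ha, rfl⟩ := Finset.mem_map.1 hu
  obtain ⟨b, hb, rfl⟩ := Finset.mem_map.1 hv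
  exact h a ha b hb hadj

lemma down_subset {S : Set V} [Fintype ↥S] {A : Finset V} (hSA : ∀ x, x ∈ S ↔ x ∈ A)
    (T : Finset ↥S) : T.map (Function.Embedding.subtype _) ⊆ A := by
  intro x hx
  obtain ⟨a, -, rfl⟩ := Finset.mem_map.1 hx
  exact (hSA a.1).1 a.2

lemma alphaN_induce {S : Set V} [Fintype ↥S] {A : Finset V} (hSA : ∀ x, x ∈ S ↔ x ∈ A) :
    alphaN (G.induce S) = alphaA G A := by
  apply le_antisymm
  · obtain ⟨T, -, hind, hcard⟩ := alphaA_spec (G.induce S) Finset.univ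
    rw [alphaN_eq, ← hcard, ← Finset.card_map (f := Function.Embedding.subtype _)]
    exact le_alphaA (down_subset hSA T) (indep_down hind)
  · obtain ⟨T, hT, hind, hcard⟩ := alphaA_spec G A
    have hT' : ∀ x ∈ T, x ∈ S := fun x hx => (hSA x).2 (hT hx)
    rw [← hcard, ← card_upF hT', alphaN_eq]
    exact le_alphaA (Finset.subset_univ _) (indep_upF hT' hind)

lemma oneExt_transfer {S : Set V} [Fintype ↥S] {A : Finset V} (hSA : ∀ x, x ∈ S ↔ x ∈ A)
    (h : OneExtA G A) : OneExt (G.induce S) := by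
  intro v
  obtain ⟨T, hTA, hvT, hind, hcard⟩ := h v.1 ((hSA v.1).1 v.2)
  have hT' : ∀ x ∈ T, x ∈ S := fun x hx => (hSA x).2 (hTA hx)
  refine ⟨upF S T hT', (mem_upF hT' v).2 hvT, indep_upF hT' hind, ?_⟩
  rw [card_upF hT', hcard, alphaN_induce hSA]

end P5

lemma alphaN_irrel {W : Type*} {i1 i2 : Fintype W} (G : SimpleGraph W) :
    @alphaN W i1 G = @alphaN W i2 G := by
  cases Subsingleton.elim i1 i2; rfl

lemma oneExt_irrel {W : Type*} {i1 i2 : Fintype W} {G : SimpleGraph W}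
    (h : @OneExt W i1 G) : @OneExt W i2 G := by
  cases Subsingleton.elim i1 i2; exact h


/-- Key splitting lemma: from a cograph one can split off a 1-extendable induced
subgraph of prescribed independence number while controlling the remainder. -/
theorem cograph_split [Fintype V] (G : SimpleGraph V) (hG : IsCograph G)
    (k : ℕ) (hk : k ≤ alphaN G) :
    ∃ W : Set V, OneExt (G.induce W) ∧ alphaN (G.induce W) = k ∧
      alphaN (G.induce Wᶜ) ≤ max (k - 1) (alphaN G - k) := by
  have hk' : k ≤ alphaA G Finset.univ := by rw [← alphaN_eq]; exact hk
  obtain ⟨B, hB, hx, ha, hr⟩ := mainA hG Finset.univ.card Finset.univ rfl k hk'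
  have hSA : ∀ x, x ∈ (↑B : Set V) ↔ x ∈ B := fun x => Finset.mem_coe
  have hSA' : ∀ x, x ∈ ((↑B : Set V)ᶜ) ↔ x ∈ Finset.univ \ B := by
    intro x
    simp [Finset.mem_sdiff]
  refine ⟨(↑B : Set V), oneExt_irrel (oneExt_transfer hSA hx), ?_, ?_⟩
  · exact (alphaN_irrel _).trans ((alphaN_induce hSA).trans ha)
  · refine le_trans (le_of_eq ((alphaN_irrel _).trans (alphaN_induce hSA'))) ?_
    rw [alphaN_eq]
    exact hr
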